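/- Let T₁ ∼ χ²₂(λ_A) and T₂ ∼ χ²₂(λ_B) be independent noncentral chi-squared random variables with λ_A > λ_B ≥ 0. Then Pr{T₁ > T₂} > 1/2. -/

import Mathlib

open MeasureTheory ProbabilityTheory Set
open scoped ENNReal NNReal

noncomputable section Stmt13Aux

local notation "ν" => gaussianReal 0 1
local notation "φ" => gaussianPDFReal 0 1

lemma nu_singleton (x : ℝ) : (ν : Measure ℝ) {x} = 0 :=
  gaussianReal_absolutelyContinuous 0 one_ne_zero (measure_singleton x)

lemma pdf_lt_pdf {x y : ℝ} (h : x^2 < y^2) : φ y < φ x := by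
  unfold gaussianPDFReal
  have h2 : (0:ℝ) < (Real.sqrt (2 * Real.pi * (1:NNReal)))⁻¹ := by
    rw [inv_pos, Real.sqrt_pos]
    positivity
  apply mul_lt_mul_of_pos_left _ h2
  apply Real.exp_lt_exp.mpr
  rw [NNReal.coe_one]
  nlinarith

lemma phi_intervalIntegrable (u v : ℝ) : IntervalIntegrable φ volume u v :=
  (integrable_gaussianPDFReal 0 1).intervalIntegrable

lemma interval_lt {b a r : ℝ} (hb : 0 ≤ b) (hab : b < a) (hr : 0 < r) :
    ∫ x in (-a-r)..(-a+r), φ x < ∫ x in (-b-r)..(-b+r), φ x := by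
  have key : (∫ x in (-b-r)..(-b+r), φ x) - (∫ x in (-a-r)..(-a+r), φ x)
      = ∫ x in (-a+r)..(-b+r), (φ x - φ (x - 2*r)) := by
    rw [intervalIntegral.integral_sub (phi_intervalIntegrable _ _)
      (((integrable_gaussianPDFReal 0 1).comp_sub_right (2*r)).intervalIntegrable)]
    rw [intervalIntegral.integral_comp_sub_right (fun x => φ x) (2*r)]
    have e1 : (-a+r) - 2*r = -a - r := by ring
    have e2 : (-b+r) - 2*r = -b - r := by ring
    rw [e1, e2]
    have h1 : (∫ x in (-a-r)..(-b-r), φ x) + (∫ x in (-b-r)..(-b+r), φ x)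
        = ∫ x in (-a-r)..(-b+r), φ x :=
      intervalIntegral.integral_add_adjacent_intervals (phi_intervalIntegrable _ _)
        (phi_intervalIntegrable _ _)
    have h2 : (∫ x in (-a-r)..(-a+r), φ x) + (∫ x in (-a+r)..(-b+r), φ x)
        = ∫ x in (-a-r)..(-b+r), φ x :=
      intervalIntegral.integral_add_adjacent_intervals (phi_intervalIntegrable _ _)
        (phi_intervalIntegrable _ _)
    linarith
  have pos : 0 < ∫ x in (-a+r)..(-b+r), (φ x - φ (x - 2*r)) := by
    apply intervalIntegral.intervalIntegral_pos_of_pos_on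
    · exact (phi_intervalIntegrable _ _).sub
        (((integrable_gaussianPDFReal 0 1).comp_sub_right (2*r)).intervalIntegrable)
    · intro x hx
      have hx2 : x < -b + r := hx.2
      have : x^2 < (x - 2*r)^2 := by nlinarith
      linarith [pdf_lt_pdf this]
    · linarith
  linarith

lemma set_eq {c t y : ℝ} (h : y^2 ≤ t) :
    {x : ℝ | (x + c)^2 + y^2 ≤ t}
      = Icc (-c - Real.sqrt (t - y^2)) (-c + Real.sqrt (t - y^2)) := by
  have hs : (0:ℝ) ≤ t - y^2 := by linarith
  have hsq : Real.sqrt (t - y^2) ^ 2 = t - y^2 := Real.sq_sqrt hs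
  have hsn : 0 ≤ Real.sqrt (t - y^2) := Real.sqrt_nonneg _
  ext x
  simp only [mem_setOf_eq, mem_Icc]
  constructor
  · intro hx
    constructor <;> nlinarith
  · rintro ⟨h1, h2⟩
    nlinarith

lemma measurable_f (c : ℝ) : Measurable (fun p : ℝ × ℝ => (p.1 + c)^2 + p.2^2) := by
  fun_prop

def mu (c : ℝ) : Measure ℝ :=
  Measure.map (fun p : ℝ × ℝ => (p.1 + c)^2 + p.2^2) ((ν : Measure ℝ).prod ν)

instance (c : ℝ) : IsProbabilityMeasure (mu c) :=
  Measure.isProbabilityMeasure_map (measurable_f c).aemeasurable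

lemma inner_lt {b a t y : ℝ} (hb : 0 ≤ b) (hab : b < a) (h : y^2 < t) :
    (ν : Measure ℝ) {x | (x + a)^2 + y^2 ≤ t} < ν {x | (x + b)^2 + y^2 ≤ t} := by
  have hs : (0:ℝ) < t - y^2 := by linarith
  set r := Real.sqrt (t - y^2) with hrdef
  have hr : 0 < r := Real.sqrt_pos.mpr hs
  rw [set_eq h.le, set_eq h.le, gaussianReal_apply_eq_integral _ one_ne_zero,
      gaussianReal_apply_eq_integral _ one_ne_zero]
  have conv : ∀ c : ℝ, (∫ x in Icc (-c - r) (-c + r), φ x)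
      = ∫ x in (-c-r)..(-c+r), φ x := by
    intro c
    rw [MeasureTheory.integral_Icc_eq_integral_Ioc,
      ← intervalIntegral.integral_of_le (by linarith)]
  rw [conv, conv]
  have hlt := interval_lt hb hab hr
  have hpos : 0 < ∫ x in (-b-r)..(-b+r), φ x :=
    intervalIntegral.intervalIntegral_pos_of_pos (phi_intervalIntegrable _ _)
      (fun x => gaussianPDFReal_pos _ _ _ one_ne_zero) (by linarith)
  exact (ENNReal.ofReal_lt_ofReal_iff hpos).mpr hlt

lemma inner_le {b a t : ℝ} (y : ℝ) (hb : 0 ≤ b) (hab : b < a) :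
    (ν : Measure ℝ) {x | (x + a)^2 + y^2 ≤ t} ≤ ν {x | (x + b)^2 + y^2 ≤ t} := by
  rcases lt_or_ge (y^2) t with h | h
  · exact (inner_lt hb hab h).le
  · have hsub : {x : ℝ | (x + a)^2 + y^2 ≤ t} ⊆ {-a} := by
      intro x hx
      simp only [mem_setOf_eq] at hx
      have h1 : x = -a := by nlinarith
      simp [h1]
    calc (ν : Measure ℝ) {x | (x + a)^2 + y^2 ≤ t} ≤ ν {-a} := measure_mono hsub
      _ = 0 := nu_singleton _
      _ ≤ _ := zero_le

lemma mu_Iic (c t : ℝ) :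
    mu c (Iic t) = ∫⁻ y, (ν : Measure ℝ) {x | (x + c)^2 + y^2 ≤ t} ∂ν := by
  rw [mu, Measure.map_apply (measurable_f c) measurableSet_Iic,
      Measure.prod_apply_symm ((measurable_f c) measurableSet_Iic)]
  rfl

lemma cdf_lt {b a t : ℝ} (hb : 0 ≤ b) (hab : b < a) (ht : 0 < t) :
    mu a (Iic t) < mu b (Iic t) := by
  rw [mu_Iic, mu_Iic]
  have hmeasb : Measurable (fun y => (ν : Measure ℝ) {x | (x + b)^2 + y^2 ≤ t}) :=
    measurable_measure_prodMk_right ((measurable_f b) measurableSet_Iic)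
  refine lintegral_strict_mono_of_ae_le_of_ae_lt_on (s := Ioo (-Real.sqrt t) (Real.sqrt t))
      hmeasb.aemeasurable ?_ ?_ ?_ ?_
  · refine ne_top_of_le_ne_top ENNReal.one_ne_top ?_
    calc ∫⁻ y, (ν : Measure ℝ) {x | (x + a)^2 + y^2 ≤ t} ∂ν
        ≤ ∫⁻ _, (1:ℝ≥0∞) ∂ν := lintegral_mono fun y => prob_le_one
      _ = 1 := by simp
  · exact ae_of_all _ fun y => inner_le y hb hab
  · intro h0
    have hv := gaussianReal_absolutelyContinuous' 0 one_ne_zero h0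
    rw [Real.volume_Ioo] at hv
    rw [ENNReal.ofReal_eq_zero] at hv
    nlinarith [Real.sqrt_pos.mpr ht]
  · refine ae_of_all _ fun y hy => ?_
    have hyt : y^2 < t := by
      have h1 := hy.1; have h2 := hy.2
      nlinarith [Real.sq_sqrt ht.le]
    exact inner_lt hb hab hyt

lemma cdf_nonpos {c t : ℝ} (ht : t ≤ 0) : mu c (Iic t) = 0 := by
  rw [mu, Measure.map_apply (measurable_f c) measurableSet_Iic]
  have hsub : (fun p : ℝ × ℝ => (p.1 + c)^2 + p.2^2) ⁻¹' (Iic t) ⊆ {(-c, 0)} := by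
    rintro ⟨x, y⟩ hp
    simp only [mem_preimage, mem_Iic] at hp
    have hx : x = -c := by nlinarith
    have hy : y = 0 := by nlinarith
    simp [hx, hy, Prod.ext_iff]
  refine measure_mono_null hsub ?_
  rw [show ({((-c : ℝ), (0:ℝ))} : Set (ℝ×ℝ)) = {(-c : ℝ)} ×ˢ {(0:ℝ)} by
    rw [Set.singleton_prod_singleton], Measure.prod_prod]
  simp [nu_singleton]

lemma Iic_add_Ioi (μ : Measure ℝ) [IsProbabilityMeasure μ] (t : ℝ) :
    μ (Iic t) + μ (Ioi t) = 1 := by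
  have := measure_add_measure_compl (μ := μ) (measurableSet_Iic (a := t))
  rwa [compl_Iic, measure_univ] at this

lemma tail_nonpos {c t : ℝ} (ht : t ≤ 0) : mu c (Ioi t) = 1 := by
  have h := Iic_add_Ioi (mu c) t
  rwa [cdf_nonpos ht, zero_add] at h

lemma tail_lt {b a t : ℝ} (hb : 0 ≤ b) (hab : b < a) (ht : 0 < t) :
    mu b (Ioi t) < mu a (Ioi t) := by
  by_contra hcon
  push_neg at hcon
  have h1 := Iic_add_Ioi (mu a) t
  have h2 := Iic_add_Ioi (mu b) t
  have hlt : mu a (Iic t) + mu a (Ioi t) < mu b (Iic t) + mu b (Ioi t) :=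
    ENNReal.add_lt_add_of_lt_of_le (measure_ne_top _ _) (cdf_lt hb hab ht) hcon
  rw [h1, h2] at hlt
  exact lt_irrefl _ hlt

lemma mu_singleton (c t : ℝ) : mu c {t} = 0 := by
  rw [mu, Measure.map_apply (measurable_f c) (measurableSet_singleton t),
      Measure.prod_apply_symm ((measurable_f c) (measurableSet_singleton t))]
  have hz : ∀ y : ℝ, (ν : Measure ℝ)
      ((fun x => (x, y)) ⁻¹' ((fun p : ℝ × ℝ => (p.1 + c)^2 + p.2^2) ⁻¹' {t})) = 0 := by
    intro y
    have hsub : (fun x => (x, y)) ⁻¹' ((fun p : ℝ × ℝ => (p.1 + c)^2 + p.2^2) ⁻¹' {t})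
        ⊆ ({-c - Real.sqrt (t - y^2), -c + Real.sqrt (t - y^2)} : Set ℝ) := by
      intro x hx
      simp only [mem_preimage, mem_singleton_iff] at hx
      have h1 : (x + c)^2 = t - y^2 := by linarith
      have h2 : Real.sqrt (t - y^2) = |x + c| := by rw [← h1, Real.sqrt_sq_eq_abs]
      simp only [mem_insert_iff, mem_singleton_iff]
      rcases abs_cases (x + c) with ⟨h3, _⟩ | ⟨h3, _⟩
      · right; rw [h3] at h2; linarith
      · left; rw [h3] at h2; linarith
    refine measure_mono_null hsub ?_
    rw [Set.insert_eq]
    exact measure_union_null (nu_singleton _) (nu_singleton _)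
  simp [hz]

lemma prod_half (μ : Measure ℝ) [IsProbabilityMeasure μ] (hatom : ∀ x : ℝ, μ {x} = 0) :
    (μ.prod μ) {p : ℝ × ℝ | p.2 < p.1} = 1/2 := by
  have hmlt : MeasurableSet {p : ℝ × ℝ | p.2 < p.1} :=
    measurableSet_lt measurable_snd measurable_fst
  have hswap : (μ.prod μ) {p : ℝ × ℝ | p.1 < p.2} = (μ.prod μ) {p : ℝ × ℝ | p.2 < p.1} := by
    conv_lhs => rw [← Measure.prod_swap]
    rw [Measure.map_apply measurable_swap (measurableSet_lt measurable_fst measurable_snd)]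
    rfl
  have hdiag : (μ.prod μ) {p : ℝ × ℝ | p.1 = p.2} = 0 := by
    rw [Measure.prod_apply (measurableSet_eq_fun measurable_fst measurable_snd)]
    have h : ∀ x : ℝ, μ (Prod.mk x ⁻¹' {p : ℝ × ℝ | p.1 = p.2}) = 0 := by
      intro x
      have he : (Prod.mk x ⁻¹' {p : ℝ × ℝ | p.1 = p.2}) = {x} := by
        ext y; simp [eq_comm]
      rw [he]; exact hatom x
    simp [hatom]
  have hle : (μ.prod μ) {p : ℝ × ℝ | p.1 ≤ p.2} = (μ.prod μ) {p : ℝ × ℝ | p.2 < p.1} := by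
    have hsplit : {p : ℝ × ℝ | p.1 ≤ p.2} = {p : ℝ × ℝ | p.1 < p.2} ∪ {p : ℝ × ℝ | p.1 = p.2} := by
      ext p; simp [le_iff_lt_or_eq]
    apply le_antisymm
    · rw [hsplit]
      refine (measure_union_le _ _).trans ?_
      rw [hdiag, add_zero, hswap]
    · rw [← hswap]
      apply measure_mono
      intro p hp
      simp only [mem_setOf_eq] at hp ⊢
      exact hp.le
  have hc := measure_add_measure_compl (μ := μ.prod μ) hmlt
  rw [measure_univ] at hc
  have hcompl : {p : ℝ × ℝ | p.2 < p.1}ᶜ = {p : ℝ × ℝ | p.1 ≤ p.2} := by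
    ext p; simp [not_lt]
  rw [hcompl, hle] at hc
  have h2 : (2:ℝ≥0∞) * (μ.prod μ) {p : ℝ × ℝ | p.2 < p.1} = 1 := by
    rw [two_mul]; exact hc
  exact (ENNReal.eq_div_iff two_ne_zero ENNReal.ofNat_ne_top).mpr h2

/-- For independent noncentral chi-squared variables `T₁ ∼ χ²₂(λA)` and `T₂ ∼ χ²₂(λB)`
with `λA > λB ≥ 0` (each realized as the law of `(X+√λ)² + Y²` for independent standard
normals), the better-aligned statistic wins with probability exceeding `1/2`:
`Pr{T₁ > T₂} > 1/2`. -/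
theorem stmt13 {Ω : Type*} [MeasurableSpace Ω] (P : Measure Ω) [IsProbabilityMeasure P]
    (lamA lamB : ℝ) (hB : 0 ≤ lamB) (hAB : lamB < lamA)
    (T₁ T₂ : Ω → ℝ) (hT₁ : Measurable T₁) (hT₂ : Measurable T₂)
    (hlaw₁ : Measure.map T₁ P = Measure.map
      (fun p : ℝ × ℝ => (p.1 + Real.sqrt lamA) ^ 2 + p.2 ^ 2)
      ((gaussianReal 0 1).prod (gaussianReal 0 1)))
    (hlaw₂ : Measure.map T₂ P = Measure.map
      (fun p : ℝ × ℝ => (p.1 + Real.sqrt lamB) ^ 2 + p.2 ^ 2)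
      ((gaussianReal 0 1).prod (gaussianReal 0 1)))
    (hind : IndepFun T₁ T₂ P) :
    (P {ω | T₂ ω < T₁ ω}).toReal > 1 / 2 := by
  have hb0 : 0 ≤ Real.sqrt lamB := Real.sqrt_nonneg _
  have hba : Real.sqrt lamB < Real.sqrt lamA := Real.sqrt_lt_sqrt hB hAB
  set a := Real.sqrt lamA with hadef
  set b := Real.sqrt lamB with hbdef
  have hmlt : MeasurableSet {p : ℝ × ℝ | p.2 < p.1} :=
    measurableSet_lt measurable_snd measurable_fst
  have hjoint : Measure.map (fun ω => (T₁ ω, T₂ ω)) P = (mu a).prod (mu b) := by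
    rw [(indepFun_iff_map_prod_eq_prod_map_map hT₁.aemeasurable hT₂.aemeasurable).mp hind,
        hlaw₁, hlaw₂]
    rfl
  have hP : P {ω | T₂ ω < T₁ ω} = ((mu a).prod (mu b)) {p : ℝ × ℝ | p.2 < p.1} := by
    rw [← hjoint, Measure.map_apply (hT₁.prodMk hT₂) hmlt]
    rfl
  have hrepr : ∀ c : ℝ, ((mu c).prod (mu b)) {p : ℝ × ℝ | p.2 < p.1}
      = ∫⁻ y, (mu c) (Ioi y) ∂(mu b) := by
    intro c
    rw [Measure.prod_apply_symm hmlt]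
    rfl
  have hhalf : ((mu b).prod (mu b)) {p : ℝ × ℝ | p.2 < p.1} = 1/2 :=
    prod_half _ (mu_singleton b)
  have hmono : ∫⁻ y, (mu b) (Ioi y) ∂(mu b) < ∫⁻ y, (mu a) (Ioi y) ∂(mu b) := by
    refine lintegral_strict_mono_of_ae_le_of_ae_lt_on (s := Ioi 0) ?_ ?_ ?_ ?_ ?_
    · exact (measurable_measure_prodMk_right (μ := mu a) hmlt).aemeasurable
    · refine ne_top_of_le_ne_top ENNReal.one_ne_top ?_
      calc ∫⁻ y, (mu b) (Ioi y) ∂(mu b) ≤ ∫⁻ _, (1:ℝ≥0∞) ∂(mu b) :=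
          lintegral_mono fun y => prob_le_one
        _ = 1 := by simp
    · refine ae_of_all _ fun y => ?_
      show (mu b) (Ioi y) ≤ (mu a) (Ioi y)
      rcases le_or_gt y 0 with hy | hy
      · rw [tail_nonpos hy, tail_nonpos hy]
      · exact (tail_lt hb0 hba hy).le
    · rw [tail_nonpos le_rfl]
      exact one_ne_zero
    · exact ae_of_all _ fun y hy => tail_lt hb0 hba hy
  have hlt : (1/2 : ℝ≥0∞) < P {ω | T₂ ω < T₁ ω} := by
    rw [hP, hrepr a, ← hhalf, hrepr b]
    exact hmono
  have h1 : ((1:ℝ≥0∞)/2).toReal < (P {ω | T₂ ω < T₁ ω}).toReal :=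
    (ENNReal.toReal_lt_toReal (by simp) (measure_ne_top P _)).mpr hlt
  have h2 : ((1:ℝ≥0∞)/2).toReal = 1/2 := by simp
  linarith [h1, h2.symm ▸ h1]

end Stmt13Aux
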